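/- arXiv:0709.3921 — 2 statements merged into one kernel-verified Lean document; each statement's English description precedes it below -/
import Mathlib

section
/- Let q ∈ ℝⁿ be a probability vector, let μ, ν ≥ 0, and suppose q_v ≤ (1 + μ)/n for all v and |{v : q_v < 1/n}| ≤ ν·n, and additionally q_v ≥ 0. Then the squared Euclidean norm satisfies ‖q - (1/n)𝟙‖₂² ≤ (ν + μ²)/n; hence if ν + μ² ≤ ε², then ‖q - (1/n)𝟙‖₂ ≤ ε/√n. -/
/-- Under the rejection-sampling bounds, the squared Euclidean distance of `q` from the
uniform vector satisfies `‖q - (1/n)𝟙‖₂² ≤ (ν + μ²)/n`; hence if `ν + μ² ≤ ε²` then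
`‖q - (1/n)𝟙‖₂ ≤ ε/√n`. -/
theorem l2_bound_of_rejection_sampling (n : ℕ) (q : Fin n → ℝ)
    (hq : ∀ v, 0 ≤ q v) (hsum : ∑ v, q v = 1)
    (μ ν : ℝ) (hμ : 0 ≤ μ) (hν : 0 ≤ ν)
    (hover : ∀ v, q v ≤ (1 + μ)/n)
    (hunder : ((Finset.univ.filter (fun v => q v < 1/(n:ℝ))).card : ℝ) ≤ ν * n) :
    (∑ v, (q v - 1/(n:ℝ))^2 ≤ (ν + μ^2)/n) ∧
    (∀ ε : ℝ, 0 ≤ ε → ν + μ^2 ≤ ε^2 →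
      Real.sqrt (∑ v, (q v - 1/(n:ℝ))^2) ≤ ε / Real.sqrt n) := by
  have hn : 0 < n := by
    rcases Nat.eq_zero_or_pos n with h | h
    · subst h; simp at hsum
    · exact h
  have hn' : (0:ℝ) < n := by exact_mod_cast hn
  set S := Finset.univ.filter (fun v => q v < 1/(n:ℝ)) with hS
  have key : ∑ v, (q v - 1/(n:ℝ))^2 ≤ (ν + μ^2)/n := by
    have hsplit : ∑ v ∈ S, (q v - 1/(n:ℝ))^2 + ∑ v ∈ Sᶜ, (q v - 1/(n:ℝ))^2
        = ∑ v, (q v - 1/(n:ℝ))^2 := Finset.sum_add_sum_compl S _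
    have h1 : ∑ v ∈ S, (q v - 1/(n:ℝ))^2 ≤ ν / n := by
      have hterm : ∀ v ∈ S, (q v - 1/(n:ℝ))^2 ≤ (1/(n:ℝ))^2 := by
        intro v hv
        rw [hS, Finset.mem_filter] at hv
        apply sq_le_sq'
        · linarith [hq v]
        · have : (0:ℝ) < 1/(n:ℝ) := by positivity
          linarith [hv.2]
      calc ∑ v ∈ S, (q v - 1/(n:ℝ))^2 ≤ ∑ _v ∈ S, (1/(n:ℝ))^2 :=
            Finset.sum_le_sum hterm
        _ = (S.card : ℝ) * (1/(n:ℝ))^2 := by rw [Finset.sum_const, nsmul_eq_mul]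
        _ ≤ (ν * n) * (1/(n:ℝ))^2 := by
            apply mul_le_mul_of_nonneg_right hunder (by positivity)
        _ = ν / n := by field_simp
    have h2 : ∑ v ∈ Sᶜ, (q v - 1/(n:ℝ))^2 ≤ μ^2 / n := by
      have hterm : ∀ v ∈ Sᶜ, (q v - 1/(n:ℝ))^2 ≤ (μ/(n:ℝ))^2 := by
        intro v hv
        rw [hS, Finset.compl_filter, Finset.mem_filter] at hv
        have hge : 1/(n:ℝ) ≤ q v := not_lt.mp hv.2
        have hle : q v ≤ (1 + μ)/n := hover v
        apply sq_le_sq'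
        · have : (0:ℝ) ≤ μ / n := by positivity
          linarith
        · have : (1 + μ)/(n:ℝ) = 1/n + μ/n := by ring
          linarith
      calc ∑ v ∈ Sᶜ, (q v - 1/(n:ℝ))^2 ≤ ∑ _v ∈ Sᶜ, (μ/(n:ℝ))^2 :=
            Finset.sum_le_sum hterm
        _ = (Sᶜ.card : ℝ) * (μ/(n:ℝ))^2 := by rw [Finset.sum_const, nsmul_eq_mul]
        _ ≤ (n : ℝ) * (μ/(n:ℝ))^2 := by
            apply mul_le_mul_of_nonneg_right _ (by positivity)
            exact_mod_cast Finset.card_le_card (Finset.subset_univ _) |>.trans_eq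
              (by simp)
        _ = μ^2 / n := by field_simp
    have : (ν + μ^2)/n = ν/n + μ^2/n := by ring
    linarith
  refine ⟨key, fun ε hε hεsq => ?_⟩
  have h1 : Real.sqrt (∑ v, (q v - 1/(n:ℝ))^2) ≤ Real.sqrt (ε^2 / n) := by
    apply Real.sqrt_le_sqrt
    calc ∑ v, (q v - 1/(n:ℝ))^2 ≤ (ν + μ^2)/n := key
      _ ≤ ε^2/n := by gcongr
  calc Real.sqrt (∑ v, (q v - 1/(n:ℝ))^2) ≤ Real.sqrt (ε^2 / n) := h1
    _ = ε / Real.sqrt n := by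
        rw [Real.sqrt_div (sq_nonneg ε), Real.sqrt_sq hε]
end

section
/- Let q ∈ ℝⁿ be a probability vector with ‖q - (1/n)𝟙‖₂ ≤ ε/√n for some ε ∈ (0, 1/4), and let W = I - (1/(2n))·diag(𝟙 + n q) + (1/(2n))·(𝟙qᵀ + q𝟙ᵀ). Then the second largest eigenvalue of W satisfies λ₂(W) ≤ 1 - 1/(2n) + ε/n ≤ 1 - 1/(4n). -/
/-- If `q` is a probability vector with `‖q - (1/n)𝟙‖₂ ≤ ε/√n`, `ε ∈ (0, 1/4)`, then
every eigenvalue of the gossip matrix `W` on the subspace orthogonal to `𝟙` (i.e. every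
eigenvalue with an eigenvector summing to zero) is at most `1 - 1/(2n) + ε/n ≤ 1 - 1/(4n)`;
in particular the second largest eigenvalue of `W` satisfies these bounds. -/
theorem gossip_matrix_second_eigenvalue_bound (n : ℕ) (hn : 0 < n) (q : Fin n → ℝ)
    (hq : ∀ v, 0 ≤ q v) (hsum : ∑ v, q v = 1)
    (ε : ℝ) (hε0 : 0 < ε) (hε : ε < 1/4)
    (hnear : Real.sqrt (∑ v, (q v - 1/(n:ℝ))^2) ≤ ε / Real.sqrt n)
    (W : Matrix (Fin n) (Fin n) ℝ)
    (hW : W = (1 : Matrix (Fin n) (Fin n) ℝ)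
        - (2*(n:ℝ))⁻¹ • Matrix.diagonal (fun i => 1 + n * q i)
        + (2*(n:ℝ))⁻¹ • Matrix.of (fun i j => q j + q i)) :
    (∀ (μ : ℝ) (v : Fin n → ℝ), v ≠ 0 → (∑ i, v i) = 0 → W.mulVec v = μ • v →
      μ ≤ 1 - 1/(2*(n:ℝ)) + ε/n) ∧
    1 - 1/(2*(n:ℝ)) + ε/n ≤ 1 - 1/(4*(n:ℝ)) := by
  have hn1 : (1:ℝ) ≤ (n:ℝ) := by exact_mod_cast hn
  have hnpos : (0:ℝ) < (n:ℝ) := by linarith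
  have hc : (0:ℝ) < (2*(n:ℝ))⁻¹ := by positivity
  constructor
  · intro μ v hv hsum0 heig
    subst hW
    rw [Matrix.add_mulVec, Matrix.sub_mulVec, Matrix.smul_mulVec,
      Matrix.smul_mulVec, Matrix.one_mulVec] at heig
    have hcomp : ∀ i, v i - (2*(n:ℝ))⁻¹ * ((1 + (n:ℝ) * q i) * v i)
        + (2*(n:ℝ))⁻¹ * (∑ j, q j * v j) = μ * v i := by
      intro i
      have h := congrFun heig i
      simp only [Pi.add_apply, Pi.sub_apply, Pi.smul_apply, smul_eq_mul,
        Matrix.mulVec_diagonal] at h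
      simp only [Matrix.mulVec, dotProduct, Matrix.of_apply] at h
      have hexp : ∑ j, (q j + q i) * v j = ∑ j, q j * v j := by
        rw [Finset.sum_congr rfl (fun j _ => add_mul (q j) (q i) (v j)),
          Finset.sum_add_distrib, ← Finset.mul_sum, hsum0, mul_zero, add_zero]
      rw [hexp] at h
      linarith [h]
    have hmul : ∀ i, μ * (v i * v i)
        = (1 - (2*(n:ℝ))⁻¹) * (v i * v i) - (2*(n:ℝ))⁻¹ * (n:ℝ) * (q i * (v i * v i))
          + (2*(n:ℝ))⁻¹ * (∑ j, q j * v j) * v i := by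
      intro i
      linear_combination (-(v i)) * (hcomp i)
    have hsumEq : μ * (∑ i, v i * v i)
        = (1 - (2*(n:ℝ))⁻¹) * (∑ i, v i * v i)
          - (2*(n:ℝ))⁻¹ * (n:ℝ) * (∑ i, q i * (v i * v i)) := by
      have h1 : ∑ i, μ * (v i * v i)
          = ∑ i, ((1 - (2*(n:ℝ))⁻¹) * (v i * v i)
            - (2*(n:ℝ))⁻¹ * (n:ℝ) * (q i * (v i * v i))
            + (2*(n:ℝ))⁻¹ * (∑ j, q j * v j) * v i) :=
        Finset.sum_congr rfl (fun i _ => hmul i)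
      rw [← Finset.mul_sum] at h1
      rw [h1, Finset.sum_add_distrib, Finset.sum_sub_distrib,
        ← Finset.mul_sum, ← Finset.mul_sum, ← Finset.mul_sum, hsum0, mul_zero, add_zero]
    have hSpos : 0 < ∑ i, v i * v i := by
      obtain ⟨i0, hi0⟩ := Function.ne_iff.mp hv
      exact Finset.sum_pos' (fun i _ => mul_self_nonneg _)
        ⟨i0, Finset.mem_univ _, mul_self_pos.mpr hi0⟩
    have hTnn : 0 ≤ ∑ i, q i * (v i * v i) :=
      Finset.sum_nonneg fun i _ => mul_nonneg (hq i) (mul_self_nonneg _)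
    have hμ : μ ≤ 1 - (2*(n:ℝ))⁻¹ := by
      nlinarith [mul_nonneg (mul_nonneg hc.le hnpos.le) hTnn]
    have hεn : 0 < ε / (n:ℝ) := by positivity
    have hcv : (2*(n:ℝ))⁻¹ = 1/(2*(n:ℝ)) := by rw [one_div]
    linarith
  · have h4 : ε / (n:ℝ) ≤ 1/(4*(n:ℝ)) := by
      rw [div_le_div_iff₀ hnpos (by positivity)]
      nlinarith
    have h3 : 1/(2*(n:ℝ)) - 1/(4*(n:ℝ)) = 1/(4*(n:ℝ)) := by ring
    linarith
end
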